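/- arXiv:2208.07437 — 2 statements merged into one kernel-verified Lean document; each statement's English description precedes it below -/
import Mathlib

section
/- Let β > 0, let Φ_{k+1} = I_{l_μ} ⊗ φ_{k+1}ᵀ with φ_{k+1} ∈ R^{l_y}, let N = [N_1 ⋯ N_{n_f}] with each N_j ∈ R^{l_y × l_μ}, let Φ̄_i be the vertical stack of Φ_{i−1}, …, Φ_{i−n_f}, and define A = Σ_{i=1}^k λ^{k−i} Φ̄_iᵀ Nᵀ N Φ̄_i + λ^k β I, b = Σ_{i=1}^k λ^{k−i} Φ̄_iᵀ Nᵀ (z_i − N V̄_i), θ_{k+1} = −A⁻¹ b, and ν_{k+1} = Φ_{k+1} θ_{k+1}. Then ν_{k+1} lies in the column space of the matrix [N_1ᵀ ⋯ N_{n_f}ᵀ] ∈ R^{l_μ × n_f l_y}. -/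
open Matrix

/-- Smul of a real positive semidefinite matrix by a nonnegative scalar. -/
lemma psd_smul_aux {n : Type*} [Fintype n] {M : Matrix n n ℝ} (h : M.PosSemidef)
    {c : ℝ} (hc : 0 ≤ c) : (c • M).PosSemidef := by
  refine ⟨?_, fun x => ?_⟩
  · have := h.1
    simp only [Matrix.IsHermitian, Matrix.conjTranspose_smul] at *
    rw [this]
    simp [star_trivial]
  · have := h.2 x
    have e : (x.sum fun i xi => x.sum fun j xj => star xi * (c • M) i j * xj) =
        c * (x.sum fun i xi => x.sum fun j xj => star xi * M i j * xj) := by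
      simp only [Finsupp.sum, Finset.mul_sum, Matrix.smul_apply, smul_eq_mul]
      exact Finset.sum_congr rfl fun i _ => Finset.sum_congr rfl fun j _ => by ring
    rw [e]
    exact mul_nonneg hc this

lemma sum_mulVec_aux {m n ι : Type*} [Fintype n] (s : Finset ι)
    (M : ι → Matrix m n ℝ) (v : n → ℝ) :
    (∑ i ∈ s, M i).mulVec v = ∑ i ∈ s, (M i).mulVec v := by
  ext r
  simp only [Matrix.mulVec, dotProduct, Matrix.sum_apply, Finset.sum_apply,
    Finset.sum_mul]
  rw [Finset.sum_comm]

set_option maxHeartbeats 2000000 in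
/-- the range lemma — the parameter pre-estimate
`ν_{k+1} = Φ_{k+1} θ_{k+1}` lies in the column space of `[N_1ᵀ ⋯ N_{n_f}ᵀ]`. -/
theorem stmt_7 (lμ ly nf : ℕ) (k : ℕ) (β lam : ℝ)
    (hβ : 0 < β) (hlam : lam ∈ Set.Ioc (0 : ℝ) 1)
    (φ : ℤ → Fin ly → ℝ)
    (N : Fin nf → Matrix (Fin ly) (Fin lμ) ℝ)
    (z : ℕ → Fin ly → ℝ) (Vbar : ℕ → Fin nf × Fin lμ → ℝ)
    -- `Φ t = I_{l_μ} ⊗ φ_tᵀ`, written entrywise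
    (Φ : ℤ → Matrix (Fin lμ) (Fin lμ × Fin ly) ℝ)
    (hΦ : ∀ t i p, Φ t i p = if i = p.1 then φ t p.2 else 0)
    -- `Nmat = [N_1 ⋯ N_{n_f}]`
    (Nmat : Matrix (Fin ly) (Fin nf × Fin lμ) ℝ)
    (hNmat : ∀ r p, Nmat r p = N p.1 r p.2)
    -- `Φbar i` is the vertical stack of `Φ_{i−1}, …, Φ_{i−n_f}`
    (Φbar : ℕ → Matrix (Fin nf × Fin lμ) (Fin lμ × Fin ly) ℝ)
    (hΦbar : ∀ (i : ℕ) p q, Φbar i p q = Φ ((i : ℤ) - 1 - (p.1 : ℤ)) p.2 q)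
    (A : Matrix (Fin lμ × Fin ly) (Fin lμ × Fin ly) ℝ)
    (hA : A = (∑ i ∈ Finset.Icc 1 k,
        lam ^ (k - i) • ((Φbar i)ᵀ * Nmatᵀ * Nmat * Φbar i))
        + (lam ^ k * β) • (1 : Matrix (Fin lμ × Fin ly) (Fin lμ × Fin ly) ℝ))
    (b : Fin lμ × Fin ly → ℝ)
    (hb : b = ∑ i ∈ Finset.Icc 1 k,
        lam ^ (k - i) • ((Φbar i)ᵀ * Nmatᵀ).mulVec (z i - Nmat.mulVec (Vbar i)))
    (θ : Fin lμ × Fin ly → ℝ) (hθ : θ = -(A⁻¹.mulVec b))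
    (ν : Fin lμ → ℝ) (hν : ν = (Φ ((k : ℤ) + 1)).mulVec θ)
    -- `Nstack = [N_1ᵀ ⋯ N_{n_f}ᵀ]`
    (Nstack : Matrix (Fin lμ) (Fin nf × Fin ly) ℝ)
    (hNstack : ∀ r p, Nstack r p = N p.1 p.2 r) :
    ∃ w : Fin nf × Fin ly → ℝ, Nstack.mulVec w = ν := by
  obtain ⟨hlam0, hlam1⟩ := hlam
  set c : ℝ := lam ^ k * β with hc
  have hc0 : 0 < c := mul_pos (pow_pos hlam0 k) hβ
  set S : Matrix (Fin lμ × Fin ly) (Fin lμ × Fin ly) ℝ :=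
    ∑ i ∈ Finset.Icc 1 k, lam ^ (k - i) • ((Φbar i)ᵀ * Nmatᵀ * Nmat * Φbar i) with hS
  -- A is positive definite, hence invertible
  have hSpsd : S.PosSemidef := by
    rw [hS]
    apply Finset.sum_induction _ Matrix.PosSemidef
      (fun a b ha hb => ha.add hb) Matrix.PosSemidef.zero
    intro i _
    apply psd_smul_aux _ (pow_nonneg hlam0.le _)
    have h1 := Matrix.posSemidef_conjTranspose_mul_self (Nmat * Φbar i)
    simpa [Matrix.conjTranspose_eq_transpose_of_trivial, Matrix.transpose_mul,
      Matrix.mul_assoc] using h1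
  have hApd : A.PosDef := by
    rw [hA]
    refine Matrix.PosDef.posSemidef_add hSpsd ?_
    have : (c • (1 : Matrix (Fin lμ × Fin ly) (Fin lμ × Fin ly) ℝ)) =
        Matrix.diagonal (fun _ => c) := by
      ext p q
      by_cases h : p = q <;>
        simp [Matrix.one_apply, Matrix.diagonal_apply, h]
    rw [this]
    exact Matrix.PosDef.diagonal (fun _ => hc0)
  have hAinv : IsUnit A.det := hApd.isUnit.map (Matrix.detMonoidHom)
  -- A θ = -b
  have hAθ : A.mulVec θ = -b := by
    rw [hθ, Matrix.mulVec_neg, Matrix.mulVec_mulVec, Matrix.mul_nonsing_inv A hAinv,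
      Matrix.one_mulVec]
  -- c • θ = -b - S θ
  have hcθ : c • θ = -b - S.mulVec θ := by
    have : A.mulVec θ = S.mulVec θ + c • θ := by
      rw [hA, Matrix.add_mulVec, Matrix.smul_mulVec, Matrix.one_mulVec]
    rw [this] at hAθ
    linear_combination (norm := abel) hAθ
  -- the key Kronecker computation
  have key : ∀ (i : ℕ) (x : Fin ly → ℝ),
      ((Φ ((k : ℤ) + 1)).mulVec (((Φbar i)ᵀ * Nmatᵀ).mulVec x)) ∈
        LinearMap.range (Matrix.mulVecLin Nstack) := by
    intro i x
    refine ⟨fun p => (∑ t, φ ((k : ℤ) + 1) t * φ ((i : ℤ) - 1 - (p.1 : ℤ)) t) * x p.2, ?_⟩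
    ext r
    simp only [Matrix.mulVecLin_apply, Matrix.mulVec, dotProduct, Matrix.mul_apply,
      Matrix.transpose_apply, hΦ, hΦbar, hNmat, hNstack, Fintype.sum_prod_type,
      Finset.mul_sum, Finset.sum_mul, ite_mul, zero_mul, mul_ite, mul_zero]
    simp only [Finset.sum_ite_eq', Finset.sum_ite_eq, Finset.sum_ite_irrel,
      Finset.sum_const_zero, Finset.mem_univ, if_true]
    rw [Finset.sum_comm]
    conv_rhs => rw [Finset.sum_comm]
    refine Finset.sum_congr rfl fun s _ => ?_
    rw [Finset.sum_comm]
    refine Finset.sum_congr rfl fun t _ => Finset.sum_congr rfl fun j _ => ?_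
    ring
  -- now assemble
  have hcν : c • ν = (Φ ((k : ℤ) + 1)).mulVec (-b)
      - (Φ ((k : ℤ) + 1)).mulVec (S.mulVec θ) := by
    rw [hν, ← Matrix.mulVec_smul, hcθ]
    simp [sub_eq_add_neg, Matrix.mulVec_add, Matrix.mulVec_neg]
  have hν' : ν = c⁻¹ • ((Φ ((k : ℤ) + 1)).mulVec (-b)
      - (Φ ((k : ℤ) + 1)).mulVec (S.mulVec θ)) := by
    rw [← hcν, smul_smul, inv_mul_cancel₀ hc0.ne', one_smul]
  have hmem : ν ∈ LinearMap.range (Matrix.mulVecLin Nstack) := by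
    rw [hν']
    refine Submodule.smul_mem _ _ (Submodule.sub_mem _ ?_ ?_)
    · -- Φ (-b) term
      rw [Matrix.mulVec_neg]
      refine Submodule.neg_mem _ ?_
      have hb' : (Φ ((k : ℤ) + 1)).mulVec b = ∑ i ∈ Finset.Icc 1 k,
          lam ^ (k - i) • (Φ ((k : ℤ) + 1)).mulVec
            (((Φbar i)ᵀ * Nmatᵀ).mulVec (z i - Nmat.mulVec (Vbar i))) := by
        rw [hb, ← Matrix.mulVecLin_apply, map_sum]
        simp_rw [_root_.map_smul, Matrix.mulVecLin_apply]
      rw [hb']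
      exact Submodule.sum_mem _ fun i _ => Submodule.smul_mem _ _ (key i _)
    · -- Φ (S θ) term
      have hSθ : S.mulVec θ = ∑ i ∈ Finset.Icc 1 k,
          lam ^ (k - i) • (((Φbar i)ᵀ * Nmatᵀ).mulVec ((Nmat * Φbar i).mulVec θ)) := by
        rw [hS, sum_mulVec_aux]
        refine Finset.sum_congr rfl fun i _ => ?_
        rw [Matrix.smul_mulVec, Matrix.mulVec_mulVec, ← Matrix.mul_assoc]
      rw [hSθ, ← Matrix.mulVecLin_apply, map_sum]
      simp_rw [_root_.map_smul, Matrix.mulVecLin_apply]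
      exact Submodule.sum_mem _ fun i _ => Submodule.smul_mem _ _ (key i _)
  obtain ⟨w, hw⟩ := hmem
  exact ⟨w, hw⟩
end

section
/- Let P be positive definite, λ > 0, B ∈ R^{m×n}, and define P' = λ⁻¹(P − P Bᵀ(λ I_m + B P Bᵀ)⁻¹ B P). Then P' is positive definite. -/
open Matrix

lemma posdef_smul {n : ℕ} {c : ℝ} (hc : 0 < c) {M : Matrix (Fin n) (Fin n) ℝ}
    (h : M.PosDef) : (c • M).PosDef := by
  refine ⟨by rw [IsHermitian, conjTranspose_smul, h.1.eq]; simp, fun x hx => ?_⟩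
  have := (h.smul hc).2 hx
  exact this

/-- the RLS-updated covariance
`P' = λ⁻¹(P − P Bᵀ(λI + B P Bᵀ)⁻¹ B P)` is positive definite. -/
theorem stmt_15 (n m : ℕ) (lam : ℝ) (hlam : 0 < lam)
    (P : Matrix (Fin n) (Fin n) ℝ) (hP : P.PosDef)
    (B : Matrix (Fin m) (Fin n) ℝ)
    (P' : Matrix (Fin n) (Fin n) ℝ)
    (hP' : P' = lam⁻¹ • (P - P * Bᵀ *
      (lam • (1 : Matrix (Fin m) (Fin m) ℝ) + B * P * Bᵀ)⁻¹ * B * P)) :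
    P'.PosDef := by
  set M : Matrix (Fin m) (Fin m) ℝ := lam • (1 : Matrix (Fin m) (Fin m) ℝ) + B * P * Bᵀ with hM
  have hMpd : M.PosDef := by
    refine (posdef_smul hlam Matrix.PosDef.one).add_posSemidef ?_
    simpa using hP.posSemidef.mul_mul_conjTranspose_same B
  set A : Matrix (Fin n) (Fin n) ℝ := lam • P⁻¹ + Bᵀ * B with hA
  have hApd : A.PosDef := by
    refine (posdef_smul hlam hP.inv).add_posSemidef ?_
    simpa using posSemidef_conjTranspose_mul_self B
  have hPP : P * P⁻¹ = 1 := mul_nonsing_inv P hP.det_pos.ne'.isUnit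
  have hMM : M⁻¹ * M = 1 := nonsing_inv_mul M hMpd.det_pos.ne'.isUnit
  have key : P' * A = 1 := by
    have hBPB : B * P * Bᵀ = M - lam • 1 := by rw [hM]; abel
    rw [hP', hA]
    rw [Matrix.smul_mul, Matrix.mul_add, Matrix.sub_mul, Matrix.sub_mul]
    have e1 : P * (lam • P⁻¹) = lam • (1 : Matrix (Fin n) (Fin n) ℝ) := by
      rw [Matrix.mul_smul, hPP]
    have e2 : P * Bᵀ * M⁻¹ * B * P * (lam • P⁻¹) = lam • (P * Bᵀ * M⁻¹ * B) := by
      rw [Matrix.mul_smul, Matrix.mul_assoc (P * Bᵀ * M⁻¹ * B) P P⁻¹, hPP, Matrix.mul_one]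
    have e3 : P * Bᵀ * M⁻¹ * B * P * (Bᵀ * B) =
        P * (Bᵀ * B) - lam • (P * Bᵀ * M⁻¹ * B) := by
      have : P * Bᵀ * M⁻¹ * B * P * (Bᵀ * B) = P * Bᵀ * M⁻¹ * (B * P * Bᵀ) * B := by
        simp only [Matrix.mul_assoc]
      rw [this, hBPB, Matrix.mul_sub, Matrix.sub_mul]
      rw [Matrix.mul_assoc (P * Bᵀ) M⁻¹ M, hMM, Matrix.mul_one]
      rw [Matrix.mul_smul, Matrix.smul_mul, Matrix.mul_one]
      simp only [Matrix.mul_assoc]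
    rw [e1, e2, e3]
    have e4 : lam • (1 : Matrix (Fin n) (Fin n) ℝ) - lam • (P * Bᵀ * M⁻¹ * B) +
        (P * (Bᵀ * B) - (P * (Bᵀ * B) - lam • (P * Bᵀ * M⁻¹ * B))) =
        lam • (1 : Matrix (Fin n) (Fin n) ℝ) := by abel
    rw [e4, smul_smul, inv_mul_cancel₀ hlam.ne', one_smul]
  have : A⁻¹ = P' := inv_eq_left_inv key
  rw [← this]
  exact hApd.inv
end
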